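/- Let M = (M_k) be a sequence of positive reals with M_0 = 1 such that lim_{k→∞} (M_k/k!)^{1/k} = ∞, and set v_M(r) = Σ_{k=0}^∞ (2πr)^k / M_k. Then for every ε > 0 there exists r_0 such that v_M(r) ≤ (1+ε)^r for all r ≥ r_0; in particular lim_{n→∞} v_M(n x)^{1/n} = 1 for every x ≥ 0 (the GRS condition). -/

import Mathlib

open Filter

private theorem aux_grow (M : ℕ → ℝ) (hpos : ∀ k, 0 < M k)
    (hlim : Tendsto (fun k : ℕ => (M k / (k.factorial : ℝ)) ^ ((1 : ℝ) / k)) atTop atTop)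
    (C : ℝ) (hC : 0 < C) : ∃ N : ℕ, ∀ k, N ≤ k → C ^ k * k.factorial ≤ M k := by
  obtain ⟨N, hN⟩ := (hlim.eventually_ge_atTop C).exists_forall_of_atTop
  refine ⟨max N 1, fun k hk => ?_⟩
  have hk1 : 1 ≤ k := le_trans (le_max_right N 1) hk
  have hkN : N ≤ k := le_trans (le_max_left N 1) hk
  have hfac : (0 : ℝ) < k.factorial := by exact_mod_cast k.factorial_pos
  have ha : (0 : ℝ) ≤ M k / k.factorial := div_nonneg (hpos k).le hfac.le
  have h1 : C ^ k ≤ ((M k / k.factorial) ^ ((1:ℝ)/k)) ^ k :=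
    pow_le_pow_left₀ hC.le (hN k hkN) k
  have h2 : ((M k / k.factorial) ^ ((1:ℝ)/k)) ^ k = M k / k.factorial := by
    rw [← Real.rpow_natCast ((M k / k.factorial) ^ ((1:ℝ)/k)) k, ← Real.rpow_mul ha,
      one_div_mul_cancel (by exact_mod_cast Nat.one_le_iff_ne_zero.mp hk1), Real.rpow_one]
  rw [h2] at h1
  calc C ^ k * k.factorial ≤ (M k / k.factorial) * k.factorial :=
        mul_le_mul_of_nonneg_right h1 hfac.le
    _ = M k := div_mul_cancel₀ _ hfac.ne'

private theorem aux_summable (M : ℕ → ℝ) (hpos : ∀ k, 0 < M k)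
    (N : ℕ) (hN : ∀ k, N ≤ k → (k.factorial : ℝ) ≤ M k) (y : ℝ) :
    Summable (fun k : ℕ => y ^ k / M k) := by
  refine Summable.of_norm_bounded_eventually_nat
    (Real.summable_pow_div_factorial |y|) ?_
  filter_upwards [eventually_ge_atTop N] with k hk
  have hfac : (0 : ℝ) < k.factorial := by exact_mod_cast k.factorial_pos
  rw [Real.norm_eq_abs, abs_div, abs_pow, abs_of_pos (hpos k)]
  exact div_le_div_of_nonneg_left (by positivity) hfac (hN k hk)

set_option maxHeartbeats 1000000 in
private theorem aux_bound (M : ℕ → ℝ) (C : ℝ) (hC : 0 < C) (N : ℕ)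
    (hN : ∀ k, N ≤ k → C ^ k * k.factorial ≤ M k) (y : ℝ) (hy : 0 ≤ y)
    (hsum : Summable (fun k : ℕ => y ^ k / M k)) :
    (∑' k : ℕ, y ^ k / M k) ≤ (∑ k ∈ Finset.range N, y ^ k / M k) + Real.exp (y / C) := by
  have hg : Summable (fun k : ℕ => (y / C) ^ k / k.factorial) :=
    Real.summable_pow_div_factorial _
  have hexp : (∑' k : ℕ, (y / C) ^ k / k.factorial) = Real.exp (y / C) := by
    rw [Real.exp_eq_exp_ℝ, NormedSpace.exp_eq_tsum_div]
  rw [← Summable.sum_add_tsum_nat_add N hsum]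
  refine add_le_add le_rfl ?_
  have h1 : (∑' k : ℕ, y ^ (k + N) / M (k + N)) ≤
      ∑' k : ℕ, (y / C) ^ (k + N) / (((k + N).factorial : ℕ) : ℝ) := by
    refine Summable.tsum_le_tsum (fun k => ?_) ((summable_nat_add_iff N).2 hsum)
      ((summable_nat_add_iff N).2 hg)
    have hfac : (0 : ℝ) < (k + N).factorial := by exact_mod_cast (k + N).factorial_pos
    have hMk := hN (k + N) (Nat.le_add_left N k)
    have hCk : (0:ℝ) < C ^ (k + N) * (k + N).factorial := by positivity
    rw [div_pow, div_div]
    exact div_le_div_of_nonneg_left (by positivity) hCk hMk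
  refine h1.trans ?_
  rw [← hexp, ← Summable.sum_add_tsum_nat_add N hg]
  have : (0:ℝ) ≤ ∑ k ∈ Finset.range N, (y / C) ^ k / k.factorial := by
    apply Finset.sum_nonneg; intro k _; positivity
  linarith

/-- If `lim (M k / k!)^(1/k) = ∞`, then `v_M r = ∑ (2πr)^k / M k` satisfies
`v_M r ≤ (1+ε)^r` for `r` large, and the GRS condition `lim v_M(n x)^(1/n) = 1`. -/
theorem assocWeight_GRS (M : ℕ → ℝ) (hpos : ∀ k, 0 < M k) (hM0 : M 0 = 1)
    (hlim : Tendsto (fun k : ℕ => (M k / (k.factorial : ℝ)) ^ ((1 : ℝ) / k)) atTop atTop) :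
    (∀ ε : ℝ, 0 < ε → ∃ r₀ : ℝ, ∀ r : ℝ, r₀ ≤ r →
        (∑' k : ℕ, (2 * Real.pi * r) ^ k / M k) ≤ (1 + ε) ^ r) ∧
      ∀ x : ℝ, 0 ≤ x →
        Tendsto (fun n : ℕ => (∑' k : ℕ, (2 * Real.pi * (n * x)) ^ k / M k) ^ ((1 : ℝ) / n))
          atTop (nhds 1) := by
  obtain ⟨N₁, hN₁⟩ := aux_grow M hpos hlim 1 one_pos
  have hsum : ∀ y : ℝ, Summable (fun k : ℕ => y ^ k / M k) := fun y =>
    aux_summable M hpos N₁ (fun k hk => by simpa using hN₁ k hk) y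
  have part1 : ∀ ε : ℝ, 0 < ε → ∃ r₀ : ℝ, ∀ r : ℝ, r₀ ≤ r →
      (∑' k : ℕ, (2 * Real.pi * r) ^ k / M k) ≤ (1 + ε) ^ r := by
    intro ε hε
    have hlog : 0 < Real.log (1 + ε) := Real.log_pos (by linarith)
    set b : ℝ := Real.log (1 + ε) / 2 with hb_def
    have hb : 0 < b := by positivity
    set C : ℝ := max 1 (2 * Real.pi / b) with hC_def
    have hC : 0 < C := lt_of_lt_of_le one_pos (le_max_left _ _)
    obtain ⟨N, hN⟩ := aux_grow M hpos hlim C hC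
    set A : ℝ := ∑ k ∈ Finset.range N, (2 * Real.pi) ^ k / M k with hA_def
    obtain ⟨r₁, hr₁⟩ :=
      ((tendsto_exp_mul_div_rpow_atTop (N : ℝ) b hb).eventually_ge_atTop
        (max A 2)).exists_forall_of_atTop
    refine ⟨max r₁ 1, fun r hr => ?_⟩
    have hr1 : (1:ℝ) ≤ r := le_trans (le_max_right _ _) hr
    have hr0 : (0:ℝ) < r := lt_of_lt_of_le one_pos hr1
    have hy : (0:ℝ) ≤ 2 * Real.pi * r := by positivity
    have key := aux_bound M C hC N hN (2 * Real.pi * r) hy (hsum _)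
    have hfin : (∑ k ∈ Finset.range N, (2 * Real.pi * r) ^ k / M k) ≤ A * r ^ N := by
      rw [hA_def, Finset.sum_mul]
      refine Finset.sum_le_sum fun k hk => ?_
      have hkN : k ≤ N := le_of_lt (Finset.mem_range.mp hk)
      have he : (2 * Real.pi * r) ^ k / M k = ((2 * Real.pi) ^ k / M k) * r ^ k := by
        rw [mul_pow]; ring
      rw [he]
      exact mul_le_mul_of_nonneg_left (pow_le_pow_right₀ hr1 hkN)
        (div_nonneg (by positivity) (hpos k).le)
    have hexp1 : Real.exp ((2 * Real.pi * r) / C) ≤ Real.exp (b * r) := by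
      apply Real.exp_le_exp.mpr
      have h2pi : 2 * Real.pi ≤ C * b := (div_le_iff₀ hb).mp (le_max_right _ _)
      rw [div_le_iff₀ hC]
      nlinarith
    have hmain := hr₁ r (le_trans (le_max_left _ _) hr)
    rw [Real.rpow_natCast] at hmain
    have hrNpos : (0:ℝ) < r ^ N := by positivity
    have hrN1 : (1:ℝ) ≤ r ^ N := one_le_pow₀ hr1
    have hA2 : A * r ^ N ≤ Real.exp (b * r) := by
      have h := le_trans (le_max_left A 2) hmain
      rw [le_div_iff₀ hrNpos] at h; linarith
    have h2 : (2:ℝ) ≤ Real.exp (b * r) := by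
      have h := le_trans (le_max_right A 2) hmain
      rw [le_div_iff₀ hrNpos] at h; nlinarith
    have hrpowε : (1 + ε : ℝ) ^ r = Real.exp (b * r) * Real.exp (b * r) := by
      rw [← Real.exp_add, Real.rpow_def_of_pos (by linarith)]
      congr 1; rw [hb_def]; ring
    have hexp_pos : (0:ℝ) < Real.exp (b * r) := Real.exp_pos _
    calc (∑' k : ℕ, (2 * Real.pi * r) ^ k / M k)
        ≤ (∑ k ∈ Finset.range N, (2 * Real.pi * r) ^ k / M k)
            + Real.exp ((2 * Real.pi * r) / C) := key
      _ ≤ A * r ^ N + Real.exp (b * r) := add_le_add hfin hexp1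
      _ ≤ Real.exp (b * r) + Real.exp (b * r) := by linarith
      _ = 2 * Real.exp (b * r) := by ring
      _ ≤ Real.exp (b * r) * Real.exp (b * r) :=
          mul_le_mul_of_nonneg_right h2 hexp_pos.le
      _ = (1 + ε) ^ r := hrpowε.symm
  refine ⟨part1, fun x hx => ?_⟩
  rcases eq_or_lt_of_le hx with hx0 | hx0
  · -- x = 0
    have hv : ∀ n : ℕ, (∑' k : ℕ, (2 * Real.pi * ((n : ℝ) * x)) ^ k / M k) = 1 := by
      intro n
      rw [← hx0, mul_zero, mul_zero]
      rw [tsum_eq_single 0 (fun k hk => by simp [zero_pow hk])]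
      simp [hM0]
    refine (tendsto_const_nhds (x := (1:ℝ))).congr fun n => ?_
    rw [hv n, Real.one_rpow]
  · -- x > 0
    rw [tendsto_order]
    constructor
    · intro a ha
      refine Eventually.of_forall fun n => lt_of_lt_of_le ha ?_
      rcases Nat.eq_zero_or_pos n with h0 | h0
      · subst h0; simp
      · have hy : (0:ℝ) ≤ 2 * Real.pi * ((n : ℝ) * x) := by positivity
        have hv1 : 1 ≤ ∑' k : ℕ, (2 * Real.pi * ((n : ℝ) * x)) ^ k / M k := by
          have h := Summable.le_tsum (hsum (2 * Real.pi * ((n : ℝ) * x))) 0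
            (fun j _ => div_nonneg (by positivity) (hpos j).le)
          simpa [hM0] using h
        exact Real.one_le_rpow hv1 (by positivity)
    · intro c hc
      have hb0 : (0:ℝ) < c := lt_trans one_pos hc
      have hsq1 : 1 < Real.sqrt c := by
        rw [show (1:ℝ) = Real.sqrt 1 from (Real.sqrt_one).symm]
        exact Real.sqrt_lt_sqrt (by norm_num) hc
      set s : ℝ := Real.sqrt c with hs_def
      have hs0 : 0 < s := lt_trans one_pos hsq1
      set ε : ℝ := s ^ ((1:ℝ)/x) - 1 with hε_def
      have hsx : 1 < s ^ ((1:ℝ)/x) :=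
        Real.one_lt_rpow_iff_of_pos hs0 |>.mpr (Or.inl ⟨hsq1, by positivity⟩)
      have hε : 0 < ε := by simp only [hε_def]; linarith
      obtain ⟨r₀, hr₀⟩ := part1 ε hε
      have h1ε : (1 + ε : ℝ) = s ^ ((1:ℝ)/x) := by rw [hε_def]; ring
      filter_upwards [eventually_ge_atTop ⌈r₀ / x⌉₊, eventually_ge_atTop 1] with n hn hn1
      have hn0 : (0:ℝ) < n := by exact_mod_cast hn1
      have hnx : r₀ ≤ (n : ℝ) * x := by
        have h1 : r₀ / x ≤ (n : ℝ) := le_trans (Nat.le_ceil _) (by exact_mod_cast hn)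
        calc r₀ = (r₀ / x) * x := by field_simp
          _ ≤ (n : ℝ) * x := mul_le_mul_of_nonneg_right h1 hx
      have hvb := hr₀ _ hnx
      have hy : (0:ℝ) ≤ 2 * Real.pi * ((n : ℝ) * x) := by positivity
      have hvpos : (0:ℝ) ≤ ∑' k : ℕ, (2 * Real.pi * ((n : ℝ) * x)) ^ k / M k :=
        tsum_nonneg fun k => div_nonneg (by positivity) (hpos k).le
      have h2 : (∑' k : ℕ, (2 * Real.pi * ((n : ℝ) * x)) ^ k / M k) ^ ((1:ℝ)/n)
          ≤ ((1 + ε) ^ ((n : ℝ) * x)) ^ ((1:ℝ)/n) :=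
        Real.rpow_le_rpow hvpos hvb (by positivity)
      have h3 : ((1 + ε : ℝ) ^ ((n : ℝ) * x)) ^ ((1:ℝ)/n) = (1 + ε) ^ x := by
        rw [← Real.rpow_mul (by linarith)]
        congr 1; field_simp
      have h4 : (1 + ε : ℝ) ^ x = s := by
        rw [h1ε, ← Real.rpow_mul hs0.le, one_div_mul_cancel hx0.ne', Real.rpow_one]
      have h5 : s < c := by
        have hsc : s * s = c := Real.mul_self_sqrt hb0.le
        nlinarith
      calc (∑' k : ℕ, (2 * Real.pi * ((n : ℝ) * x)) ^ k / M k) ^ ((1:ℝ)/n)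
          ≤ (1 + ε) ^ x := h2.trans_eq h3
        _ = s := h4
        _ < c := h5
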